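/- For every even integer L ≥ 2, every real C > 0 and every integer p ≥ 1 with 4C/(π√p) < 1, the μ-measure of the set of configurations φ for which every bond (x,y) satisfies dist(φ_x, φ_y) ≥ C/√p is at least (1 − 4C/(π√p))^{L²/2}; consequently, for every β ≥ 0 and J > 0, Z_Λ(β,J,p) ≥ (1 − 4C/(π√p))^{L²/2}. -/

import Mathlib

open MeasureTheory Real

/-- The site space: the discrete torus of side `L`. -/
abbrev Torus (L : ℕ) := ZMod L × ZMod L

/-- A configuration of the non-linear model: one spin in the circle `ℝ/2πℤ` per site. -/
abbrev NLConfig (L : ℕ) := Torus L → AddCircle (2 * Real.pi)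

/-- The two unit coordinate vectors `e₁ = (1,0)` and `e₂ = (0,1)`. -/
def coordVec (L : ℕ) : Fin 2 → Torus L
  | 0 => (1, 0)
  | 1 => (0, 1)

instance : Fact ((0 : ℝ) < 2 * Real.pi) := ⟨by positivity⟩

/-- The product of normalized Haar measures on the spins. -/
noncomputable def nlMeasure (L : ℕ) [NeZero L] : Measure (NLConfig L) :=
  Measure.pi fun _ => (AddCircle.haarAddCircle : Measure (AddCircle (2 * Real.pi)))

/-- The non-linear Hamiltonian
`H_{p,J}(φ) = −J·Σ_{bonds (x,y)} ((1 + cos(φ_x − φ_y))/2)^p`. -/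
noncomputable def nlH (L : ℕ) [NeZero L] (p : ℕ) (J : ℝ) (φ : NLConfig L) : ℝ :=
  -J * ∑ x : Torus L, ∑ i : Fin 2,
    ((1 + Real.Angle.cos (φ x - φ (x + coordVec L i))) / 2) ^ p

/-- The non-linear model partition function. -/
noncomputable def nlZ (L : ℕ) [NeZero L] (β J : ℝ) (p : ℕ) : ℝ :=
  ∫ φ, Real.exp (-β * nlH L p J φ) ∂(nlMeasure L)

lemma haar_ball_le (c : AddCircle (2 * Real.pi)) {δ : ℝ} :
    (AddCircle.haarAddCircle : Measure (AddCircle (2 * Real.pi))) (Metric.ball c δ)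
      ≤ ENNReal.ofReal (δ / Real.pi) := by
  have hπ : (0:ℝ) < Real.pi := Real.pi_pos
  have h2π : (0:ℝ) < 2 * Real.pi := by positivity
  have hvol : (volume : Measure (AddCircle (2 * Real.pi))) (Metric.ball c δ)
      ≤ ENNReal.ofReal (2 * δ) := by
    calc (volume : Measure (AddCircle (2 * Real.pi))) (Metric.ball c δ)
        ≤ volume (Metric.closedBall c δ) := measure_mono Metric.ball_subset_closedBall
      _ = ENNReal.ofReal (min (2 * Real.pi) (2 * δ)) :=
          AddCircle.volume_closedBall (T := 2 * Real.pi) _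
      _ ≤ ENNReal.ofReal (2 * δ) := ENNReal.ofReal_le_ofReal (min_le_right _ _)
  rw [AddCircle.volume_eq_smul_haarAddCircle] at hvol
  rw [Measure.smul_apply, smul_eq_mul] at hvol
  calc AddCircle.haarAddCircle (Metric.ball c δ)
      ≤ ENNReal.ofReal (2 * δ) / ENNReal.ofReal (2 * Real.pi) := by
        rw [ENNReal.le_div_iff_mul_le (Or.inl (ENNReal.ofReal_pos.2 h2π).ne')
          (Or.inl ENNReal.ofReal_ne_top)]
        calc AddCircle.haarAddCircle (Metric.ball c δ) * ENNReal.ofReal (2 * Real.pi)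
            = ENNReal.ofReal (2 * Real.pi) * AddCircle.haarAddCircle (Metric.ball c δ) :=
              mul_comm _ _
          _ ≤ ENNReal.ofReal (2 * δ) := hvol
    _ = ENNReal.ofReal (2 * δ / (2 * Real.pi)) := (ENNReal.ofReal_div_of_pos h2π).symm
    _ = ENNReal.ofReal (δ / Real.pi) := by rw [mul_div_mul_left _ _ (two_ne_zero)]

lemma haar_good {ι : Type*} [Fintype ι] (c : ι → AddCircle (2 * Real.pi)) {δ : ℝ}
    (hδ : 0 ≤ δ) :
    ENNReal.ofReal (1 - (Fintype.card ι) * (δ / Real.pi)) ≤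
      (AddCircle.haarAddCircle : Measure (AddCircle (2 * Real.pi)))
        {θ : AddCircle (2 * Real.pi) | ∀ j, δ ≤ dist θ (c j)} := by
  classical
  set ν : Measure (AddCircle (2 * Real.pi)) := AddCircle.haarAddCircle with hν
  have hset : {θ : AddCircle (2 * Real.pi) | ∀ j, δ ≤ dist θ (c j)}
      = (⋃ j, Metric.ball (c j) δ)ᶜ := by
    ext θ
    simp [Metric.mem_ball, not_lt, dist_comm]
  have hUm : MeasurableSet (⋃ j, Metric.ball (c j) δ) :=
    (isOpen_iUnion fun j => Metric.isOpen_ball).measurableSet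
  have hU : ν (⋃ j, Metric.ball (c j) δ) ≤ ENNReal.ofReal ((Fintype.card ι) * (δ / Real.pi)) := by
    calc ν (⋃ j, Metric.ball (c j) δ) ≤ ∑ j, ν (Metric.ball (c j) δ) :=
          measure_iUnion_fintype_le _ _
      _ ≤ ∑ _j : ι, ENNReal.ofReal (δ / Real.pi) :=
          Finset.sum_le_sum fun j _ => haar_ball_le (c j)
      _ = (Fintype.card ι) * ENNReal.ofReal (δ / Real.pi) := by
          rw [Finset.sum_const, Finset.card_univ, nsmul_eq_mul]
      _ ≤ ENNReal.ofReal ((Fintype.card ι) * (δ / Real.pi)) := by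
          rw [ENNReal.ofReal_mul (by positivity)]
          simp [ENNReal.ofReal_natCast]
  rw [hset, measure_compl hUm (measure_ne_top _ _), measure_univ]
  calc ENNReal.ofReal (1 - (Fintype.card ι) * (δ / Real.pi))
      = 1 - ENNReal.ofReal ((Fintype.card ι) * (δ / Real.pi)) := by
        rw [ENNReal.ofReal_sub _ (by positivity), ENNReal.ofReal_one]
    _ ≤ 1 - ν (⋃ j, Metric.ball (c j) δ) := tsub_le_tsub_left hU _

lemma one_le_nlZ (L : ℕ) [NeZero L] (p : ℕ) (β J : ℝ) (hβ : 0 ≤ β) (hJ : 0 < J) :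
    1 ≤ nlZ L β J p := by
  haveI : IsProbabilityMeasure (nlMeasure L) := by
    unfold nlMeasure; infer_instance
  have hcos : ∀ θ : Real.Angle, -1 ≤ Real.Angle.cos θ ∧ Real.Angle.cos θ ≤ 1 := by
    intro θ
    rw [← Real.Angle.cos_toReal]
    exact ⟨Real.neg_one_le_cos _, Real.cos_le_one _⟩
  have hterm : ∀ φ : NLConfig L, ∀ x : Torus L, ∀ i : Fin 2,
      (0:ℝ) ≤ ((1 + Real.Angle.cos (φ x - φ (x + coordVec L i))) / 2) ^ p ∧
      ((1 + Real.Angle.cos (φ x - φ (x + coordVec L i))) / 2) ^ p ≤ 1 := by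
    intro φ x i
    obtain ⟨h1, h2⟩ := hcos (φ x - φ (x + coordVec L i))
    constructor
    · exact pow_nonneg (by linarith) p
    · exact pow_le_one₀ (by linarith) (by linarith)
  have hHle : ∀ φ : NLConfig L, nlH L p J φ ≤ 0 ∧
      -β * nlH L p J φ ≤ β * (J * ((L^2 : ℕ) * 2)) := by
    intro φ
    have hsum0 : (0:ℝ) ≤ ∑ x : Torus L, ∑ i : Fin 2,
        ((1 + Real.Angle.cos (φ x - φ (x + coordVec L i))) / 2) ^ p :=
      Finset.sum_nonneg fun x _ => Finset.sum_nonneg fun i _ => (hterm φ x i).1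
    have hsum1 : ∑ x : Torus L, ∑ i : Fin 2,
        ((1 + Real.Angle.cos (φ x - φ (x + coordVec L i))) / 2) ^ p ≤ (L^2 : ℕ) * 2 := by
      calc ∑ x : Torus L, ∑ i : Fin 2,
            ((1 + Real.Angle.cos (φ x - φ (x + coordVec L i))) / 2) ^ p
          ≤ ∑ _x : Torus L, ∑ _i : Fin 2, (1:ℝ) :=
            Finset.sum_le_sum fun x _ => Finset.sum_le_sum fun i _ => (hterm φ x i).2
        _ = (Fintype.card (Torus L)) * 2 := by simp [mul_comm]
        _ = (L^2 : ℕ) * 2 := by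
            norm_cast
            simp [ZMod.card, sq]
    constructor
    · simp only [nlH, neg_mul]
      exact neg_nonpos.2 (mul_nonneg hJ.le hsum0)
    · simp only [nlH]
      calc -β * (-J * ∑ x : Torus L, ∑ i : Fin 2,
            ((1 + Real.Angle.cos (φ x - φ (x + coordVec L i))) / 2) ^ p)
          = β * (J * ∑ x : Torus L, ∑ i : Fin 2,
            ((1 + Real.Angle.cos (φ x - φ (x + coordVec L i))) / 2) ^ p) := by ring
        _ ≤ β * (J * ((L^2 : ℕ) * 2)) := by
            apply mul_le_mul_of_nonneg_left _ hβ
            exact mul_le_mul_of_nonneg_left hsum1 hJ.le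
  have hHcont : Continuous fun φ : NLConfig L => nlH L p J φ := by
    unfold nlH
    refine continuous_const.mul ?_
    refine continuous_finset_sum _ fun x _ => continuous_finset_sum _ fun i _ => ?_
    refine Continuous.pow (Continuous.div_const (continuous_const.add ?_) 2) p
    exact Real.Angle.continuous_cos.comp ((continuous_apply x).sub (continuous_apply _))
  have hfc : Continuous fun φ : NLConfig L => Real.exp (-β * nlH L p J φ) :=
    Real.continuous_exp.comp (continuous_const.mul hHcont)
  have hint : Integrable (fun φ : NLConfig L => Real.exp (-β * nlH L p J φ)) (nlMeasure L) := by
    refine ⟨hfc.aestronglyMeasurable, HasFiniteIntegral.of_bounded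
      (C := Real.exp (β * (J * ((L^2 : ℕ) * 2)))) (ae_of_all _ fun φ => ?_)⟩
    rw [Real.norm_eq_abs, abs_of_pos (Real.exp_pos _)]
    exact Real.exp_le_exp.2 (hHle φ).2
  have h1 : ∫ (_ : NLConfig L), (1:ℝ) ∂(nlMeasure L) = 1 := by
    simp [nlMeasure]
  rw [nlZ, ← h1]
  refine integral_mono (integrable_const 1) hint fun φ => ?_
  rw [← Real.exp_zero]
  exact Real.exp_le_exp.2 (by nlinarith [(hHle φ).1])

/-- the 'disordered' lower bound on the non-linear model: the set
of configurations all of whose bonds have angle difference at least `C/√p` has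
measure at least `(1 − 4C/(π√p))^{L²/2}`, and hence so is the partition function
bounded below. -/
theorem nl_disordered_lower_bound (L : ℕ) (hL : 2 ≤ L) (hLeven : Even L)
    (C : ℝ) (hC : 0 < C) (p : ℕ) (hp : 1 ≤ p)
    (hsmall : 4 * C / (Real.pi * Real.sqrt p) < 1) :
    haveI : NeZero L := ⟨by omega⟩
    (ENNReal.ofReal ((1 - 4 * C / (Real.pi * Real.sqrt p)) ^ (L ^ 2 / 2)) ≤
      nlMeasure L {φ : NLConfig L | ∀ x : Torus L, ∀ i : Fin 2,
        C / Real.sqrt p ≤ dist (φ x) (φ (x + coordVec L i))}) ∧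
    ∀ β J : ℝ, 0 ≤ β → 0 < J →
      nlZ L β J p ≥ (1 - 4 * C / (Real.pi * Real.sqrt p)) ^ (L ^ 2 / 2) := by
  haveI : NeZero L := ⟨by omega⟩
  classical

  have hπ : (0:ℝ) < Real.pi := Real.pi_pos
  have hp0 : (0:ℝ) < (p : ℝ) := by exact_mod_cast hp
  have hsp : (0:ℝ) < Real.sqrt p := Real.sqrt_pos.2 hp0
  set δ : ℝ := C / Real.sqrt p with hδdef
  set ε : ℝ := 4 * C / (Real.pi * Real.sqrt p) with hεdef
  have hδ0 : 0 < δ := div_pos hC hsp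
  have hε_eq : ε = 4 * (δ / Real.pi) := by
    rw [hεdef, hδdef]; field_simp
  have h1ε0 : 0 ≤ 1 - ε := by linarith
  have hε0 : 0 < ε := by rw [hε_eq]; positivity
  -- parity
  have hdvd : 2 ∣ L := hLeven.two_dvd
  set pr : Torus L → ZMod 2 := fun x => ZMod.castHom hdvd (ZMod 2) (x.1 + x.2) with hprdef
  have hprv : ∀ (x : Torus L) (i : Fin 2), pr (x + coordVec L i) = pr x + 1 := by
    intro x i
    have hco : (coordVec L i).1 + (coordVec L i).2 = 1 := by
      fin_cases i <;> simp [coordVec]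
    have h1 : (x + coordVec L i).1 + (x + coordVec L i).2 = (x.1 + x.2) + 1 := by
      simp only [Prod.fst_add, Prod.snd_add]
      linear_combination hco
    show (ZMod.castHom hdvd (ZMod 2)) ((x + coordVec L i).1 + (x + coordVec L i).2)
        = (ZMod.castHom hdvd (ZMod 2)) (x.1 + x.2) + 1
    rw [h1, map_add, map_one]
  set P : Torus L → Prop := fun x => pr x = 0 with hPdef
  have hz2a : ∀ z w : ZMod 2, w = z + 1 → ¬ z = 0 → w = 0 := by decide
  have hz2b : ∀ z w : ZMod 2, w = z + 1 → ¬ w = 0 → z = 0 := by decide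
  have hz2c : ∀ z w : ZMod 2, w = z + 1 → z = 0 → ¬ w = 0 := by decide
  have hPadd : ∀ (b : Torus L), ¬ P b → ∀ i, P (b + coordVec L i) :=
    fun b hb i => hz2a _ _ (hprv b i) hb
  have hPsub : ∀ (b : Torus L), ¬ P b → ∀ i, P (b - coordVec L i) := by
    intro b hb i
    have h := hprv (b - coordVec L i) i
    rw [sub_add_cancel] at h
    exact hz2b _ _ h hb
  have hPadd' : ∀ (x : Torus L), P x → ∀ i, ¬ P (x + coordVec L i) :=
    fun x hx i => hz2c _ _ (hprv x i) hx
  -- cardinality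
  have hcard : Fintype.card {x : Torus L // ¬ P x} ≤ L ^ 2 / 2 := by
    have hinj : Function.Injective (fun b : {x : Torus L // ¬ P x} =>
        (⟨b.1 + coordVec L 0, hPadd b.1 b.2 0⟩ : {x : Torus L // P x})) := by
      intro b1 b2 h
      apply Subtype.ext
      have h2 := congrArg Subtype.val h
      simp only at h2
      exact add_right_cancel h2
    have h1 := Fintype.card_le_of_injective _ hinj
    have h2 : Fintype.card {x : Torus L // ¬ P x}
        = Fintype.card (Torus L) - Fintype.card {x : Torus L // P x} :=
      Fintype.card_subtype_compl _
    have h3 : Fintype.card {x : Torus L // P x} ≤ Fintype.card (Torus L) :=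
      Fintype.card_subtype_le _
    have h4 : Fintype.card (Torus L) = L ^ 2 := by
      simp [ZMod.card, sq]
    omega
  -- the event
  set Eset : Set (NLConfig L) := {φ : NLConfig L | ∀ x : Torus L, ∀ i : Fin 2,
      δ ≤ dist (φ x) (φ (x + coordVec L i))} with hEdef
  have hEmeas : MeasurableSet Eset := by
    have h : Eset = ⋂ (x : Torus L) (i : Fin 2),
        {φ : NLConfig L | δ ≤ dist (φ x) (φ (x + coordVec L i))} := by
      ext φ; simp [hEdef, Set.mem_iInter]
    rw [h]
    refine MeasurableSet.iInter fun x => MeasurableSet.iInter fun i => ?_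
    exact measurableSet_le measurable_const
      ((continuous_apply x).dist (continuous_apply (x + coordVec L i))).measurable
  -- split into white/black
  let νW : Measure ({x : Torus L // P x} → AddCircle (2 * Real.pi)) :=
    Measure.pi fun _ => AddCircle.haarAddCircle
  let νB : Measure ({x : Torus L // ¬ P x} → AddCircle (2 * Real.pi)) :=
    Measure.pi fun _ => AddCircle.haarAddCircle
  haveI : IsProbabilityMeasure νW := by unfold νW; infer_instance
  haveI : IsProbabilityMeasure νB := by unfold νB; infer_instance
  let e := MeasurableEquiv.piEquivPiSubtypeProd (fun _ : Torus L => AddCircle (2 * Real.pi)) P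
  have hmp := measurePreserving_piEquivPiSubtypeProd
    (fun _ : Torus L => (AddCircle.haarAddCircle : Measure (AddCircle (2 * Real.pi)))) P
  have hμE : nlMeasure L Eset = (νW.prod νB) (e.symm ⁻¹' Eset) := by
    have h1 : Eset = e ⁻¹' (e.symm ⁻¹' Eset) := by
      ext φ; simp
    conv_lhs => rw [h1]
    exact hmp.measure_preimage (e.symm.measurable hEmeas).nullMeasurableSet
  have hsect : ∀ η : {x : Torus L // P x} → AddCircle (2 * Real.pi),
      ENNReal.ofReal (1 - ε) ^ (L ^ 2 / 2) ≤ νB (Prod.mk η ⁻¹' (e.symm ⁻¹' Eset)) := by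
    intro η
    let G : {x : Torus L // ¬ P x} → Set (AddCircle (2 * Real.pi)) := fun b =>
      {θ : AddCircle (2 * Real.pi) | ∀ j : Fin 2 ⊕ Fin 2, δ ≤ dist θ (Sum.elim
        (fun i => η ⟨b.1 + coordVec L i, hPadd b.1 b.2 i⟩)
        (fun i => η ⟨b.1 - coordVec L i, hPsub b.1 b.2 i⟩) j)}
    have hGsub : Set.pi Set.univ G ⊆ Prod.mk η ⁻¹' (e.symm ⁻¹' Eset) := by
      intro σ hσ
      simp only [Set.mem_preimage]
      show e.symm (η, σ) ∈ Eset
      intro x i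
      have hgl : ∀ z : Torus L,
          e.symm (η, σ) z = if h : P z then η ⟨z, h⟩ else σ ⟨z, h⟩ := fun z => rfl
      by_cases hx : P x
      · have hx2 : ¬ P (x + coordVec L i) := hPadd' x hx i
        rw [hgl, hgl, dif_pos hx, dif_neg hx2]
        have hb := hσ ⟨x + coordVec L i, hx2⟩ (Set.mem_univ _) (Sum.inr i)
        simp only [Sum.elim_inr] at hb
        have key : (⟨x + coordVec L i - coordVec L i,
            hPsub (x + coordVec L i) hx2 i⟩ : {x : Torus L // P x}) = ⟨x, hx⟩ :=
          Subtype.ext (add_sub_cancel_right x (coordVec L i))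
        rw [key] at hb
        rw [dist_comm]
        exact hb
      · have hx2 : P (x + coordVec L i) := hPadd x hx i
        rw [hgl, hgl, dif_neg hx, dif_pos hx2]
        have hb := hσ ⟨x, hx⟩ (Set.mem_univ _) (Sum.inl i)
        simp only [Sum.elim_inl] at hb
        exact hb
    have hGb : ∀ b, ENNReal.ofReal (1 - ε) ≤ AddCircle.haarAddCircle (G b) := by
      intro b
      have h := haar_good (Sum.elim
        (fun i => η ⟨b.1 + coordVec L i, hPadd b.1 b.2 i⟩)
        (fun i => η ⟨b.1 - coordVec L i, hPsub b.1 b.2 i⟩)) hδ0.le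
      have h4 : ((Fintype.card (Fin 2 ⊕ Fin 2)) : ℝ) = 4 := by simp
      rw [h4] at h
      have : (1 : ℝ) - ε = 1 - 4 * (δ / Real.pi) := by rw [hε_eq]
      rw [this]
      exact h
    calc ENNReal.ofReal (1 - ε) ^ (L ^ 2 / 2)
        ≤ ENNReal.ofReal (1 - ε) ^ (Fintype.card {x : Torus L // ¬ P x}) :=
          pow_le_pow_right_of_le_one' (ENNReal.ofReal_le_one.2 (by linarith)) hcard
      _ = ∏ _b : {x : Torus L // ¬ P x}, ENNReal.ofReal (1 - ε) := by
          rw [Finset.prod_const, Finset.card_univ]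
      _ ≤ ∏ b : {x : Torus L // ¬ P x}, AddCircle.haarAddCircle (G b) :=
          Finset.prod_le_prod' fun b _ => hGb b
      _ = νB (Set.pi Set.univ G) := (Measure.pi_pi _ _).symm
      _ ≤ νB (Prod.mk η ⁻¹' (e.symm ⁻¹' Eset)) := measure_mono hGsub
  refine ⟨?_, ?_⟩
  · rw [ENNReal.ofReal_pow h1ε0, hμE, Measure.prod_apply (e.symm.measurable hEmeas)]
    calc ENNReal.ofReal (1 - ε) ^ (L ^ 2 / 2)
        = ∫⁻ _η, ENNReal.ofReal (1 - ε) ^ (L ^ 2 / 2) ∂νW := by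
          rw [lintegral_const, measure_univ, mul_one]
      _ ≤ ∫⁻ η, νB (Prod.mk η ⁻¹' (e.symm ⁻¹' Eset)) ∂νW := lintegral_mono hsect
  · intro β J hβ hJ
    have h1 : (1 - ε) ^ (L ^ 2 / 2) ≤ 1 := pow_le_one₀ h1ε0 (by linarith)
    exact le_trans h1 (one_le_nlZ L p β J hβ hJ)
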